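/- Let T be a connected multigraph with all degrees even containing vertices a_{i-1}, a_i, b_{i-1}, b_i of a rectangular cell, where T contains the double edge (a_i, b_i) with multiplicity 2, the single horizontal edge (b_{i-1}, b_i), no horizontal edge incident to a_i, and the single vertical edge (a_{i-1}, b_{i-1}). Define T' by replacing the two copies of (a_i, b_i) with one copy of (a_i, b_i), adding the horizontal edge (a_{i-1}, a_i), adding one copy of (a_{i-1}, b_{i-1}) (making it a double edge), and removing the edge (b_{i-1}, b_i). Then every vertex of T' has even degree, and if the horizontal edges (a_{i-1}, a_i) and (b_{i-1}, b_i) have equal length and the vertical edges (a_{i-1}, b_{i-1}) and (a_i, b_i) have equal length, then T' has the same total length as T. -/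
import Mathlib


/-- A multigraph on vertex type `V`: a multiset of edges (unordered pairs). -/
structure Multigraph (V : Type*) where
  edges : Multiset (Sym2 V)

namespace Multigraph

variable {V : Type*} [DecidableEq V]

/-- Degree of a vertex, counting edge multiplicities (loops count twice). -/
def deg (G : Multigraph V) (v : V) : ℕ :=
  (G.edges.map (fun e =>
    Sym2.lift ⟨fun a b => (if a = v then 1 else 0) + (if b = v then 1 else 0),
      fun a b => by ring⟩ e)).sum

/-- Total length of a multigraph, with respect to an edge-length function. -/
def length (G : Multigraph V) (len : Sym2 V → ℝ) : ℝ :=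
  (G.edges.map len).sum

/-- Adjacency via some edge of the multigraph. -/
def Adj (G : Multigraph V) (u w : V) : Prop := s(u, w) ∈ G.edges

/-- Reachability in the multigraph. -/
def Reachable (G : Multigraph V) : V → V → Prop :=
  Relation.ReflTransGen G.Adj

/-- A vertex is non-isolated if some edge is incident to it. -/
def NonIsolated (G : Multigraph V) (v : V) : Prop := ∃ e ∈ G.edges, v ∈ e

/-- A multigraph is connected if all non-isolated vertices are mutually reachable. -/
def Connected (G : Multigraph V) : Prop :=
  ∀ u v, G.NonIsolated u → G.NonIsolated v → G.Reachable u v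

end Multigraph

/-- The multiset of edges traversed by a walk given as a list of vertices. -/
def walkEdges {V : Type*} : List V → Multiset (Sym2 V)
  | [] => 0
  | [_] => 0
  | a :: b :: l => s(a, b) ::ₘ walkEdges (b :: l)

/-- The state-(0,2)-style transformation T → T' shifting a vertical
double traversal of (aᵢ, bᵢ) to the preceding aisle preserves even degrees and,
when opposite sides of the rectangular cell have equal lengths, total length. -/
theorem shift_transformation_even_and_length
    {V : Type*} [DecidableEq V] (T : Multigraph V) (len : Sym2 V → ℝ)
    (Horiz : Sym2 V → Prop)
    (a₀ a₁ b₀ b₁ : V)  -- a₀ = a_{i-1}, a₁ = a_i, b₀ = b_{i-1}, b₁ = b_i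
    (hd1 : a₀ ≠ a₁) (hd2 : a₀ ≠ b₀) (hd3 : a₀ ≠ b₁)
    (hd4 : a₁ ≠ b₀) (hd5 : a₁ ≠ b₁) (hd6 : b₀ ≠ b₁)
    (hconn : T.Connected) (heven : ∀ v, Even (T.deg v))
    (hdouble : T.edges.count s(a₁, b₁) = 2)
    (hhoriz : s(b₀, b₁) ∈ T.edges)
    (hsingle : T.edges.count s(a₀, b₀) = 1)
    (hHtop : Horiz s(a₀, a₁)) (hHbot : Horiz s(b₀, b₁))
    (hnoH : ∀ f ∈ T.edges, Horiz f → a₁ ∉ f)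
    (T' : Multigraph V)
    (hT' : T'.edges =
      s(a₀, a₁) ::ₘ s(a₀, b₀) ::ₘ ((T.edges.erase s(a₁, b₁)).erase s(b₀, b₁))) :
    (∀ v, Even (T'.deg v)) ∧
      (len s(a₀, a₁) = len s(b₀, b₁) → len s(a₀, b₀) = len s(a₁, b₁) →
        T'.length len = T.length len) := by
  have hne : s(b₀, b₁) ≠ s(a₁, b₁) := by
    simp [Sym2.eq_iff]
    tauto
  have hmem1 : s(a₁, b₁) ∈ T.edges := by
    rw [← Multiset.count_pos, hdouble]; norm_num
  have hmem2 : s(b₀, b₁) ∈ T.edges.erase s(a₁, b₁) :=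
    Multiset.mem_erase_of_ne hne |>.mpr hhoriz
  have hE : T.edges = s(a₁, b₁) ::ₘ s(b₀, b₁) ::ₘ ((T.edges.erase s(a₁, b₁)).erase s(b₀, b₁)) := by
    rw [Multiset.cons_erase hmem2, Multiset.cons_erase hmem1]
  constructor
  · intro v
    have h := heven v
    rw [Multigraph.deg, hE] at h
    rw [Multigraph.deg, hT']
    simp only [Multiset.map_cons, Multiset.sum_cons, Sym2.lift_mk] at h ⊢
    rw [Nat.even_iff] at h ⊢
    split_ifs at h ⊢ <;> omega
  · intro h1 h2
    rw [Multigraph.length, Multigraph.length, hT']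
    conv_rhs => rw [hE]
    simp only [Multiset.map_cons, Multiset.sum_cons]
    rw [h1, h2]
    ring
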